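/- Let Q be a closed convex subset of EuclideanSpace ℝ (Fin N), let p : Fin n → EuclideanSpace ℝ (Fin N), and let ρ : Fin n → ℝ with 0 ≤ ρ i for all i, such that for all i ≠ j either p i ≠ p j or ρ i ≠ ρ j. Let P i be the power cells of (Q, p, ρ) (weights equal to the radii ρ). Then the configuration p is collision-free in Q with radii ρ if and only if Metric.closedBall (p i) (ρ i) ⊆ interior (P i) for every i. -/

import Mathlib

open Metric Set

/-- The power cell of index `i` for environment `Q`, points `p` and weights `w`. -/
def powerCell {N n : ℕ} (Q : Set (EuclideanSpace ℝ (Fin N)))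
    (p : Fin n → EuclideanSpace ℝ (Fin N)) (w : Fin n → ℝ) (i : Fin n) :
    Set (EuclideanSpace ℝ (Fin N)) :=
  {q ∈ Q | ∀ j, ‖q - p i‖ ^ 2 - (w i) ^ 2 ≤ ‖q - p j‖ ^ 2 - (w j) ^ 2}

/-- A configuration `p` with radii `ρ` is collision free in `Q`. -/
def CollisionFree {N n : ℕ} (Q : Set (EuclideanSpace ℝ (Fin N)))
    (p : Fin n → EuclideanSpace ℝ (Fin N)) (ρ : Fin n → ℝ) : Prop :=
  (∀ i j, i ≠ j → ρ i + ρ j < ‖p i - p j‖) ∧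
    ∀ i, Metric.closedBall (p i) (ρ i) ⊆ interior Q

lemma aux_push {N n : ℕ} {Q : Set (EuclideanSpace ℝ (Fin N))}
    {p : Fin n → EuclideanSpace ℝ (Fin N)} {ρ : Fin n → ℝ} {i j : Fin n}
    (h : Metric.closedBall (p i) (ρ i) ⊆ interior (powerCell Q p ρ i))
    (hρi : 0 ≤ ρ i) (hd : p i ≠ p j) :
    ∃ c > 0, ∀ s, 0 < s → s < c →
      (ρ i + s) ^ 2 - ρ i ^ 2 ≤ (‖p i - p j‖ - ρ i - s) ^ 2 - ρ j ^ 2 := by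
  set d := ‖p i - p j‖ with hdd
  have hd0 : 0 < d := by rw [hdd]; exact norm_sub_pos_iff.mpr hd
  set q : EuclideanSpace ℝ (Fin N) := p i + (ρ i / d) • (p j - p i) with hq
  have hqmem : q ∈ Metric.closedBall (p i) (ρ i) := by
    rw [mem_closedBall, dist_eq_norm]
    have : q - p i = (ρ i / d) • (p j - p i) := by rw [hq]; abel
    rw [this, norm_smul, Real.norm_eq_abs, abs_of_nonneg (div_nonneg hρi hd0.le),
      norm_sub_rev]
    rw [← hdd]
    field_simp
    exact le_rfl
  have hint := h hqmem
  rw [mem_interior_iff_mem_nhds, Metric.mem_nhds_iff] at hint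
  obtain ⟨ε, hε, hball⟩ := hint
  refine ⟨ε, hε, fun s hs hsε => ?_⟩
  set q' : EuclideanSpace ℝ (Fin N) := q + (s / d) • (p j - p i) with hq'
  have hq'mem : q' ∈ powerCell Q p ρ i := by
    apply hball
    rw [mem_ball, dist_eq_norm]
    have : q' - q = (s / d) • (p j - p i) := by rw [hq']; abel
    rw [this, norm_smul, Real.norm_eq_abs, abs_of_nonneg (div_nonneg hs.le hd0.le),
      norm_sub_rev, ← hdd]
    field_simp
    exact hsε
  have hineq := hq'mem.2 j
  have e1 : q' - p i = ((ρ i + s) / d) • (p j - p i) := by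
    rw [hq', hq, add_div, ← add_div]
    module
  have e2 : q' - p j = (((ρ i + s) / d) - 1) • (p j - p i) := by
    rw [hq', hq]
    module
  rw [e1, e2, norm_smul, norm_smul, Real.norm_eq_abs, Real.norm_eq_abs,
    norm_sub_rev, ← hdd] at hineq
  have h1 : |(ρ i + s) / d| * d = ρ i + s := by
    rw [abs_of_nonneg (div_nonneg (by linarith) hd0.le)]; field_simp
  have h2 : (|(ρ i + s) / d - 1| * d) ^ 2 = (d - ρ i - s) ^ 2 := by
    rw [mul_pow, sq_abs]
    field_simp
    ring
  rw [h1] at hineq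
  rw [h2] at hineq
  linarith

/-- A configuration is collision free iff every robot body is contained in the
interior of its body power cell. -/
theorem collisionFree_iff_body_in_interior_powerCell {N n : ℕ}
    (Q : Set (EuclideanSpace ℝ (Fin N))) (hQc : IsClosed Q) (hQconv : Convex ℝ Q)
    (p : Fin n → EuclideanSpace ℝ (Fin N)) (ρ : Fin n → ℝ)
    (hρ : ∀ i, 0 ≤ ρ i)
    (hnd : ∀ i j, i ≠ j → p i ≠ p j ∨ ρ i ≠ ρ j) :
    CollisionFree Q p ρ ↔
      ∀ i, Metric.closedBall (p i) (ρ i) ⊆ interior (powerCell Q p ρ i) := by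
  constructor
  · intro hc i
    set V : Set (EuclideanSpace ℝ (Fin N)) :=
      interior Q ∩ ⋂ j : {j : Fin n // j ≠ i},
        {q | ‖q - p i‖ ^ 2 - ρ i ^ 2 < ‖q - p (j : Fin n)‖ ^ 2 - ρ (j : Fin n) ^ 2} with hV
    have hVopen : IsOpen V := by
      refine isOpen_interior.inter (isOpen_iInter_of_finite fun j => ?_)
      exact isOpen_lt (by fun_prop) (by fun_prop)
    have hVP : V ⊆ powerCell Q p ρ i := by
      rintro q ⟨hq1, hq2⟩
      refine ⟨interior_subset hq1, fun j => ?_⟩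
      by_cases hj : j = i
      · subst hj; exact le_rfl
      · exact le_of_lt (Set.mem_iInter.mp hq2 ⟨j, hj⟩)
    have hBV : Metric.closedBall (p i) (ρ i) ⊆ V := by
      intro q hq
      have hqi : ‖q - p i‖ ≤ ρ i := by
        rw [← dist_eq_norm]; exact mem_closedBall.mp hq
      refine ⟨hc.2 i hq, Set.mem_iInter.mpr fun ⟨j, hj⟩ => ?_⟩
      have h2 : ρ i + ρ j < ‖p i - p j‖ := hc.1 i j (Ne.symm hj)
      have h3 : ‖p i - p j‖ ≤ ‖p i - q‖ + ‖q - p j‖ := by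
        have := dist_triangle (p i) q (p j)
        simpa [dist_eq_norm] using this
      have h4 : ‖p i - q‖ = ‖q - p i‖ := norm_sub_rev _ _
      have h5 : 0 ≤ ‖q - p j‖ := norm_nonneg _
      have h6 : 0 ≤ ‖q - p i‖ := norm_nonneg _
      show ‖q - p i‖ ^ 2 - ρ i ^ 2 < ‖q - p j‖ ^ 2 - ρ j ^ 2
      nlinarith [hρ j]
    exact hBV.trans (interior_maximal hVP hVopen)
  · intro h
    constructor
    · intro i j hij
      have hci : p i ∈ powerCell Q p ρ i :=
        interior_subset (h i (mem_closedBall_self (hρ i)))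
      have hcj : p j ∈ powerCell Q p ρ j :=
        interior_subset (h j (mem_closedBall_self (hρ j)))
      have hpij : p i ≠ p j := by
        intro he
        have h1 := hci.2 j
        have h2 := hcj.2 i
        rw [he] at h1
        rw [← he] at h2
        simp only [sub_self, norm_zero] at h1 h2
        have : ρ i = ρ j := by
          have := hρ i; have := hρ j; nlinarith
        rcases hnd i j hij with h | h
        · exact h he
        · exact h this
      obtain ⟨c, hc0, hc⟩ := aux_push (h i) (hρ i) hpij
      obtain ⟨c', hc'0, hc'⟩ := aux_push (h j) (hρ j) (Ne.symm hpij)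
      set d := ‖p i - p j‖ with hdd
      have hd0 : 0 < d := norm_sub_pos_iff.mpr hpij
      have hdrev : ‖p j - p i‖ = d := norm_sub_rev _ _
      set s := min (c / 2) (d / 2) with hs
      set s' := min (c' / 2) (d / 2) with hs'
      have hs0 : 0 < s := lt_min (by linarith) (by linarith)
      have hs'0 : 0 < s' := lt_min (by linarith) (by linarith)
      have hsc : s < c := lt_of_le_of_lt (min_le_left _ _) (by linarith)
      have hs'c : s' < c' := lt_of_le_of_lt (min_le_left _ _) (by linarith)
      have hsd : s ≤ d / 2 := min_le_right _ _
      have hs'd : s' ≤ d / 2 := min_le_right _ _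
      have A := hc s hs0 hsc
      have B := hc' s' hs'0 hs'c
      rw [hdrev] at B
      by_contra hle
      push_neg at hle
      -- from A: ρ j + (d - ρ i - s) < 0
      have hA : ρ j + (d - ρ i - s) < 0 := by
        by_contra h'
        push_neg at h'
        nlinarith [hρ i, hρ j]
      have hB : ρ i + (d - ρ j - s') < 0 := by
        by_contra h'
        push_neg at h'
        nlinarith [hρ i, hρ j]
      linarith
    · intro i
      have : powerCell Q p ρ i ⊆ Q := fun q hq => hq.1
      exact (h i).trans (interior_mono this)
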